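/- For the alternating word z_{n-1} of length n-1, the f-polynomial satisfies F_{z_{n-1}}(t) = 1 + Σ (t+1)^k, where the sum is over all compositions (c_1,...,c_k) of n with c_1,...,c_{k-1} ∈ {1,2} and c_k ≥ 1 arbitrary. Here F_{z_{n-1}}(t) = 1 + Σ_T ((t+1)/t)^{κ(z_{n-1}^T)} t^{|T|+1} over subsets T of {1,...,n-1}. -/

import Mathlib

/-- `κ(w) = 2 + #{i : w_i ≠ w_{i+1}}` for nonempty `w`, and `κ(empty) = 1`. -/
def kappa (w : List Bool) : ℕ :=
  if w = [] then 1 else 2 + (w.zip w.tail).countP (fun p => p.1 != p.2)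

/-- The subword of `v` at the (1-indexed) positions in `T`. -/
def subword (v : List Bool) (T : Finset ℕ) : List Bool :=
  ((v.zipIdx.map Prod.swap).filter (fun p => decide (p.1 + 1 ∈ T))).map Prod.snd

/-- The `f`-polynomial `F_v(t) = 1 + ∑_{T ⊆ [|v|]} ((t+1)/t)^{κ(v^T)} t^{|T|+1}`,
written with the power of `t` as `t^{|T|+1-κ(v^T)}` (valid since `κ(v^T) ≤ |T|+1`). -/
noncomputable def fPoly (v : List Bool) : Polynomial ℤ :=
  1 + ∑ T ∈ (Finset.Icc 1 v.length).powerset,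
      (Polynomial.X + 1) ^ kappa (subword v T) *
        Polynomial.X ^ (T.card + 1 - kappa (subword v T))

/-- The alternating word of length `m` starting with `x` (where `x = false`, `y = true`). -/
def zWord (m : ℕ) : List Bool := (List.range m).map (fun i => decide (i % 2 = 1))






lemma zip_self (l : List ℕ) : l.zip l = l.map (fun i => (i, i)) := by
  induction l with
  | nil => rfl
  | cons a t ih => simp [ih]

lemma subword_eq (M : ℕ) (T : Finset ℕ) :
    subword (zWord M) T
      = ((List.range M).filter (fun i => decide (i + 1 ∈ T))).map
          (fun i => decide (i % 2 = 1)) := by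
  unfold subword zWord
  rw [List.zipIdx_map, List.zipIdx_eq_zip_range', List.length_range, ← List.range_eq_range', zip_self]
  rw [List.map_map, List.map_map, List.filter_map, List.map_map]
  congr 1

lemma filter_range_of_subset {T : Finset ℕ} {m M : ℕ} (hT : T ⊆ Finset.Icc 1 m)
    (h : m ≤ M) :
    (List.range M).filter (fun i => decide (i + 1 ∈ T))
      = (List.range m).filter (fun i => decide (i + 1 ∈ T)) := by
  induction M, h using Nat.le_induction with
  | base => rfl
  | succ M hM ih =>
    rw [List.range_succ, List.filter_append, ih]
    have : M + 1 ∉ T := by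
      intro hmem
      have := hT hmem
      simp at this
      omega
    simp [this]

lemma subword_indep {T : Finset ℕ} {m M : ℕ} (hT : T ⊆ Finset.Icc 1 m) (h : m ≤ M) :
    subword (zWord M) T = subword (zWord m) T := by
  rw [subword_eq, subword_eq, filter_range_of_subset hT h]

lemma subword_insert (r : ℕ) (T : Finset ℕ) (hT : T ⊆ Finset.Icc 1 r) :
    subword (zWord (r + 1)) (insert (r + 1) T)
      = subword (zWord r) T ++ [decide (r % 2 = 1)] := by
  rw [subword_eq, subword_eq, List.range_succ, List.filter_append]
  have h1 : (List.range r).filter (fun i => decide (i + 1 ∈ insert (r + 1) T))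
      = (List.range r).filter (fun i => decide (i + 1 ∈ T)) := by
    apply List.filter_congr
    intro i hi
    simp only [List.mem_range] at hi
    simp only [decide_eq_decide, Finset.mem_insert]
    constructor
    · rintro (h | h)
      · omega
      · exact h
    · intro h; right; exact h
  have h2 : ([r].filter (fun i => decide (i + 1 ∈ insert (r + 1) T))) = [r] := by
    simp
  rw [h1, h2, List.map_append]
  rfl

lemma length_filter_inter (T : Finset ℕ) (m : ℕ) :
    ((List.range m).filter (fun i => decide (i + 1 ∈ T))).length
      = (T ∩ Finset.Icc 1 m).card := by
  induction m with
  | zero => simp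
  | succ m ih =>
    rw [List.range_succ, List.filter_append, List.length_append, ih]
    have hIcc : Finset.Icc 1 (m + 1) = insert (m + 1) (Finset.Icc 1 m) := by
      ext x; simp; omega
    by_cases h : m + 1 ∈ T
    · have : T ∩ Finset.Icc 1 (m + 1) = insert (m + 1) (T ∩ Finset.Icc 1 m) := by
        rw [hIcc, Finset.inter_insert_of_mem h]
      rw [this, Finset.card_insert_of_notMem (by simp)]
      simp [h]
    · have : T ∩ Finset.Icc 1 (m + 1) = T ∩ Finset.Icc 1 m := by
        rw [hIcc, Finset.inter_insert_of_notMem h]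
      rw [this]
      simp [h]

lemma length_subword {T : Finset ℕ} {m : ℕ} (hT : T ⊆ Finset.Icc 1 m) :
    (subword (zWord m) T).length = T.card := by
  rw [subword_eq, List.length_map, length_filter_inter,
    Finset.inter_eq_left.mpr hT]

def myC : List Bool → ℕ
  | [] => 0
  | [_] => 0
  | a :: b :: t => (if a = b then 0 else 1) + myC (b :: t)

lemma countP_zip_eq_myC (l : List Bool) :
    (l.zip l.tail).countP (fun p => p.1 != p.2) = myC l := by
  induction l with
  | nil => rfl
  | cons a t ih =>
    cases t with
    | nil => rfl
    | cons b t' =>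
      simp only [List.tail_cons, List.zip_cons_cons, List.countP_cons, myC] at *
      rw [← ih]
      by_cases h : a = b <;> simp [h, Nat.add_comm]

lemma kappa_eq (l : List Bool) (h : l ≠ []) : kappa l = 2 + myC l := by
  simp [kappa, h, countP_zip_eq_myC]

lemma kappa_nil : kappa [] = 1 := rfl

lemma kappa_single (a : Bool) : kappa [a] = 2 := by rfl

lemma myC_append2 (l : List Bool) (a b : Bool) :
    myC (l ++ [a, b]) = myC (l ++ [a]) + (if a = b then 0 else 1) := by
  induction l with
  | nil => simp [myC, Nat.add_comm]
  | cons c t ih =>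
    cases t with
    | nil => simp [myC, Nat.add_comm, Nat.add_assoc]
    | cons d t' =>
      simp only [List.cons_append, myC, List.append_eq] at *
      omega

lemma kappa_append2 (l : List Bool) (a b : Bool) :
    kappa (l ++ [a, b]) = kappa (l ++ [a]) + (if a = b then 0 else 1) := by
  rw [kappa_eq _ (by simp), kappa_eq _ (by simp), myC_append2]
  omega

lemma myC_le (l : List Bool) : myC l + 1 ≤ l.length ∨ l = [] ∨ ∃ a, l = [a] := by
  induction l with
  | nil => tauto
  | cons a t ih =>
    cases t with
    | nil => right; right; exact ⟨a, rfl⟩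
    | cons b t' =>
      left
      simp only [myC, List.length_cons]
      rcases ih with h | h | ⟨c, h⟩
      · simp at h ⊢; split <;> omega
      · simp at h
      · simp [h, myC]; split <;> omega

lemma kappa_le (l : List Bool) : kappa l ≤ l.length + 1 := by
  rcases myC_le l with h | h | ⟨a, h⟩
  · rw [kappa_eq _ (by rintro rfl; simp at h)]; omega
  · simp [h, kappa_nil]
  · simp [h, kappa_single]

noncomputable section
open Polynomial Finset

def KT (T : Finset ℕ) : ℕ := kappa (subword (zWord (T.sup id)) T)

lemma KT_spec {T : Finset ℕ} {m : ℕ} (hT : T ⊆ Finset.Icc 1 m) :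
    kappa (subword (zWord m) T) = KT T := by
  have h1 : T ⊆ Finset.Icc 1 (T.sup id) := by
    intro x hx
    have := hT hx
    simp only [Finset.mem_Icc] at this ⊢
    exact ⟨this.1, Finset.le_sup (f := id) hx⟩
  have h2 : T.sup id ≤ m := Finset.sup_le fun x hx => (Finset.mem_Icc.mp (hT hx)).2
  rw [subword_indep h1 h2, KT]

def W (T : Finset ℕ) : Polynomial ℤ :=
  (X + 1) ^ (KT T) * X ^ (T.card + 1 - KT T)

lemma subword_empty (m : ℕ) : subword (zWord m) ∅ = [] := by
  rw [subword_eq]; simp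

lemma W_empty : W ∅ = X + 1 := by
  have : KT ∅ = 1 := by rw [KT, subword_empty]; rfl
  simp [W, this]

lemma W_single (r : ℕ) : W {r + 1} = (X + 1) ^ 2 := by
  have h : KT {r + 1} = 2 := by
    rw [← KT_spec (m := r + 1) (by simp)]
    have : ({r + 1} : Finset ℕ) = insert (r + 1) (∅ : Finset ℕ) := rfl
    rw [this, subword_insert r ∅ (by simp), subword_empty]
    rfl
  simp [W, h]

lemma KT_le {T : Finset ℕ} {m : ℕ} (hT : T ⊆ Finset.Icc 1 m) : KT T ≤ T.card + 1 := by
  rw [← KT_spec hT, ← length_subword hT]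
  exact kappa_le _

lemma W_insert2 {s r : ℕ} {T : Finset ℕ} (hT : T ⊆ Finset.Icc 1 s) (hsr : s + 1 ≤ r) :
    W (insert (r + 1) (insert (s + 1) T))
      = (if (r + 1 + (s + 1)) % 2 = 1 then X + 1 else X) * W (insert (s + 1) T) := by
  set U := insert (s + 1) T with hU
  have hUsub : U ⊆ Finset.Icc 1 (s + 1) := by
    intro x hx
    rcases Finset.mem_insert.mp hx with h | h
    · simp [h]
    · have := hT h; simp only [Finset.mem_Icc] at this ⊢; omega
  have hUsub' : U ⊆ Finset.Icc 1 r := hUsub.trans (Finset.Icc_subset_Icc_right hsr)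
  have hKU : KT U = kappa (subword (zWord s) T ++ [decide (s % 2 = 1)]) := by
    rw [← KT_spec hUsub, hU, subword_insert s T hT]
  have hnotmem : r + 1 ∉ U := fun h => by
    have := hUsub h; simp only [Finset.mem_Icc] at this; omega
  have hcard : (insert (r + 1) U).card = U.card + 1 := Finset.card_insert_of_notMem hnotmem
  have hKins : KT (insert (r + 1) U)
      = KT U + (if (r + 1 + (s + 1)) % 2 = 1 then 1 else 0) := by
    rw [← KT_spec (m := r + 1) (Finset.insert_subset (by simp)
      (hUsub'.trans (Finset.Icc_subset_Icc_right (Nat.le_succ r)))),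
      subword_insert r U hUsub', subword_indep hUsub hsr, hU, subword_insert s T hT,
      List.append_assoc]
    have h2 : [decide (s % 2 = 1)] ++ [decide (r % 2 = 1)]
        = [decide (s % 2 = 1), decide (r % 2 = 1)] := rfl
    rw [h2, kappa_append2, hKU]
    congr 1
    by_cases hs : s % 2 = 1 <;> by_cases hr : r % 2 = 1
    · have h3 : (r + 1 + (s + 1)) % 2 = 0 := by omega
      simp [hs, hr, h3]
    · have h3 : (r + 1 + (s + 1)) % 2 = 1 := by omega
      simp [hs, hr, h3]
    · have h3 : (r + 1 + (s + 1)) % 2 = 1 := by omega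
      simp [hs, hr, h3]
    · have h3 : (r + 1 + (s + 1)) % 2 = 0 := by omega
      simp [hs, hr, h3]
  have hKle : KT U ≤ U.card + 1 := KT_le hUsub
  rw [W, W, hcard, hKins]
  by_cases hpar : (r + 1 + (s + 1)) % 2 = 1
  · simp only [hpar, if_true]
    have he : U.card + 1 + 1 - (KT U + 1) = U.card + 1 - KT U := by omega
    rw [he, pow_succ]
    ring
  · simp only [hpar, if_false]
    have he : U.card + 1 + 1 - (KT U + 0) = (U.card + 1 - KT U) + 1 := by omega
    rw [he, pow_succ]
    ring
end

noncomputable section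
open Polynomial Finset

def Qp (s : ℕ) : Polynomial ℤ := ∑ T ∈ (Finset.Icc 1 s).powerset, W (insert (s + 1) T)

lemma peel_gen (f : Finset ℕ → Polynomial ℤ) (r : ℕ) :
    ∑ T ∈ (Finset.Icc 1 r).powerset, f T
      = f ∅ + ∑ u ∈ Finset.range r, ∑ T ∈ (Finset.Icc 1 u).powerset, f (insert (u + 1) T) := by
  induction r with
  | zero => simp
  | succ r ih =>
    have h1 : Finset.Icc 1 (r + 1) = insert (r + 1) (Finset.Icc 1 r) := by
      ext x; simp; omega
    have h2 : r + 1 ∉ Finset.Icc 1 r := by simp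
    rw [h1, Finset.sum_powerset_insert h2, ih, Finset.sum_range_succ]
    ring

lemma Qp_eq (s : ℕ) :
    Qp s = (X + 1) ^ 2
      + ∑ u ∈ Finset.range s,
          (if (s + 1 + (u + 1)) % 2 = 1 then X + 1 else X) * Qp u := by
  rw [Qp, peel_gen (fun T => W (insert (s + 1) T)) s,
    show insert (s + 1) (∅ : Finset ℕ) = {s + 1} from rfl, W_single]
  congr 1
  apply Finset.sum_congr rfl
  intro u hu
  simp only [Finset.mem_range] at hu
  rw [Qp, Finset.mul_sum]
  apply Finset.sum_congr rfl
  intro T hT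
  simp only [Finset.mem_powerset] at hT
  exact W_insert2 hT (by omega)

lemma Qp_rec (s : ℕ) :
    Qp (s + 2) = (X + 1) * Qp (s + 1) + (X + 1) * Qp s := by
  have h0 := Qp_eq s
  have h2 := Qp_eq (s + 2)
  rw [Finset.sum_range_succ, Finset.sum_range_succ] at h2
  have hc1 : (s + 2 + 1 + (s + 1 + 1)) % 2 = 1 := by omega
  have hc2 : (s + 2 + 1 + (s + 1)) % 2 = 0 := by omega
  have hcongr : ∑ u ∈ Finset.range s,
      (if (s + 2 + 1 + (u + 1)) % 2 = 1 then X + 1 else (X : Polynomial ℤ)) * Qp u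
      = ∑ u ∈ Finset.range s,
      (if (s + 1 + (u + 1)) % 2 = 1 then X + 1 else X) * Qp u := by
    apply Finset.sum_congr rfl
    intro u hu
    have : (s + 2 + 1 + (u + 1)) % 2 = (s + 1 + (u + 1)) % 2 := by omega
    rw [this]
  have hQs : ∑ u ∈ Finset.range s,
      (if (s + 1 + (u + 1)) % 2 = 1 then X + 1 else (X : Polynomial ℤ)) * Qp u
      = Qp s - (X + 1) ^ 2 := by
    rw [h0]; ring
  have e1 : (if (1 : ℕ) = 1 then (X + 1 : Polynomial ℤ) else X) = X + 1 := if_pos rfl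
  have e0 : (if (0 : ℕ) = 1 then (X + 1 : Polynomial ℤ) else X) = X := if_neg (by omega)
  simp only [hc1, hc2, e1, e0, eq_self_iff_true, if_true] at h2
  rw [hcongr, hQs] at h2
  rw [h2]
  ring

def P : ℕ → Polynomial ℤ
  | 0 => 0
  | 1 => X + 1
  | (n + 2) => (X + 1) * (1 + P (n + 1) + P n)

lemma Qp_eq_P : ∀ s : ℕ, Qp s = P (s + 2) - P (s + 1) := by
  have h0 : Qp 0 = P 2 - P 1 := by
    rw [Qp_eq]; simp [P]; ring
  have h1 : Qp 1 = P 3 - P 2 := by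
    rw [Qp_eq]
    have : (1 + 1 + (0 + 1)) % 2 = 1 := by omega
    simp [this, h0]
    show (X+1)^2 + (X+1) * (P 2 - P 1) = P 3 - P 2
    simp only [P]
    ring
  intro s
  induction s using Nat.twoStepInduction with
  | zero => exact h0
  | one => exact h1
  | more s ihs ihs1 =>
    rw [Qp_rec, ihs, ihs1]
    show _ = P (s + 4) - P (s + 3)
    have e4 : P (s + 4) = (X + 1) * (1 + P (s + 3) + P (s + 2)) := rfl
    have e3 : P (s + 3) = (X + 1) * (1 + P (s + 2) + P (s + 1)) := rfl
    rw [e4, e3]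
    ring

lemma L_eq (r : ℕ) : ∑ T ∈ (Finset.Icc 1 r).powerset, W T = P (r + 1) := by
  rw [peel_gen W r, W_empty]
  have : ∀ u, ∑ T ∈ (Finset.Icc 1 u).powerset, W (insert (u + 1) T) = Qp u := fun u => rfl
  simp only [this, Qp_eq_P]
  rw [Finset.sum_range_sub (f := fun u => P (u + 1))]
  show X + 1 + (P (r + 1) - P 1) = P (r + 1)
  simp only [P]
  ring

lemma partA (r : ℕ) : fPoly (zWord r) = 1 + P (r + 1) := by
  rw [fPoly]
  have hlen : (zWord r).length = r := by simp [zWord]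
  rw [hlen, ← L_eq r]
  refine congrArg (HAdd.hAdd 1) ?_
  apply Finset.sum_congr rfl
  intro T hT
  simp only [Finset.mem_powerset] at hT
  rw [KT_spec hT, W]
end

section PartB
open Polynomial

def Scomp (n k : ℕ) : Type :=
  {c : List ℕ // c.length = k ∧ c.sum = n ∧ (∀ a ∈ c, 0 < a) ∧
      ∀ a ∈ c.dropLast, a = 1 ∨ a = 2}

lemma Scomp_get_lt (n k : ℕ) (c : Scomp n k) (i : Fin c.val.length) :
    c.val.get i < n + 1 := by
  have hmem : c.val.get i ∈ c.val := by
    simpa using List.get_mem c.val i.1 i.2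
  have h2 := List.single_le_sum (l := c.val) (fun b _ => Nat.zero_le b) _ hmem
  have := c.prop.2.1
  omega

instance ScompFinite (n k : ℕ) : Finite (Scomp n k) := by
  refine Finite.of_injective
    (fun c => fun i : Fin k =>
      (⟨c.val.get (Fin.cast c.prop.1.symm i), Scomp_get_lt n k c _⟩ : Fin (n + 1))) ?_
  intro c c' h
  apply Subtype.ext
  apply List.ext_get (by rw [c.prop.1, c'.prop.1])
  intro i h1 h2
  have hc := c.prop.1
  have := congrFun h ⟨i, by omega⟩
  simpa using this

lemma card_S_zero (k : ℕ) (hk : 1 ≤ k) : Nat.card (Scomp 0 k) = 0 := by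
  have : IsEmpty (Scomp 0 k) := by
    constructor
    rintro ⟨c, hlen, hsum, hpos, _⟩
    have hne : c ≠ [] := by intro h; rw [h] at hlen; simp at hlen; omega
    obtain ⟨a, t, rfl⟩ := List.exists_cons_of_ne_nil hne
    have := hpos a (by simp)
    simp at hsum
    omega
  simp [Nat.card_of_isEmpty]

lemma card_S_gt (n k : ℕ) (h : n < k) : Nat.card (Scomp n k) = 0 := by
  have : IsEmpty (Scomp n k) := by
    constructor
    rintro ⟨c, hlen, hsum, hpos, _⟩
    have : c.length ≤ c.sum := by
      have h1 : c.length = (c.map (fun _ => 1)).sum := by simp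
      have h2 : (c.map (fun _ => 1)).sum ≤ (c.map id).sum := by
        apply List.sum_le_sum
        intro a ha
        exact hpos a ha
      rw [List.map_id] at h2
      rw [h1]
      exact h2
    omega
  simp [Nat.card_of_isEmpty]

lemma card_S_one (n : ℕ) (hn : 1 ≤ n) : Nat.card (Scomp n 1) = 1 := by
  have : Unique (Scomp n 1) := by
    refine ⟨⟨⟨[n], by simp, by simp, by simp; omega, by simp⟩⟩, ?_⟩
    rintro ⟨c, hlen, hsum, hpos, hdl⟩
    obtain ⟨a, rfl⟩ := List.length_eq_one_iff.mp hlen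
    have ha : a = n := by simpa using hsum
    subst ha
    rfl
  exact Nat.card_unique

end PartB

section PartB2

def consS (a : ℕ) (ha : a = 1 ∨ a = 2) {m k : ℕ} (hk : 1 ≤ k) (t : Scomp m k)
    {m' : ℕ} (hm : a + m = m') : Scomp m' (k + 1) :=
  ⟨a :: t.val, by
    obtain ⟨hlen, hsum, hpos, hdl⟩ := t.prop
    have hne : t.val ≠ [] := by
      intro h; rw [h] at hlen; simp at hlen; omega
    refine ⟨by simp [hlen], by simp [hsum, hm], ?_, ?_⟩
    · intro b hb
      rcases List.mem_cons.mp hb with rfl | hb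
      · omega
      · exact hpos b hb
    · intro b hb
      rw [List.dropLast_cons_of_ne_nil hne] at hb
      rcases List.mem_cons.mp hb with rfl | hb
      · exact ha
      · exact hdl b hb⟩

lemma card_S_rec (n k : ℕ) (hk : 1 ≤ k) :
    Nat.card (Scomp (n + 2) (k + 1))
      = Nat.card (Scomp (n + 1) k) + Nat.card (Scomp n k) := by
  classical
  set F : Scomp (n + 1) k ⊕ Scomp n k → Scomp (n + 2) (k + 1) :=
    (fun x => match x with
      | Sum.inl t => consS 1 (Or.inl rfl) hk t (by omega)
      | Sum.inr t => consS 2 (Or.inr rfl) hk t (by omega)) with hF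
  have hinj : Function.Injective F := by
    rintro (t | t) (t' | t') h <;>
      simp only [hF, consS] at h <;>
      replace h := congrArg Subtype.val h <;>
      simp only [List.cons.injEq] at h
    · exact congrArg Sum.inl (Subtype.ext h.2)
    · omega
    · omega
    · exact congrArg Sum.inr (Subtype.ext h.2)
  have hsurj : Function.Surjective F := by
    rintro ⟨c, hlen, hsum, hpos, hdl⟩
    have hne : c ≠ [] := by intro h; rw [h] at hlen; simp at hlen
    obtain ⟨a, t, rfl⟩ := List.exists_cons_of_ne_nil hne
    have htlen : t.length = k := by simpa using hlen
    have htne : t ≠ [] := by intro h; rw [h] at htlen; simp at htlen; omega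
    have hdl' := List.dropLast_cons_of_ne_nil htne (x := a)
    have ha : a = 1 ∨ a = 2 := hdl a (by rw [hdl']; simp)
    have htpos : ∀ b ∈ t, 0 < b := fun b hb => hpos b (by simp [hb])
    have htdl : ∀ b ∈ t.dropLast, b = 1 ∨ b = 2 := fun b hb =>
      hdl b (by rw [hdl']; simp [hb])
    have hsum' : a + t.sum = n + 2 := by simpa using hsum
    rcases ha with rfl | rfl
    · refine ⟨Sum.inl ⟨t, htlen, by omega, htpos, htdl⟩, ?_⟩
      simp only [hF, consS]
      rfl
    · refine ⟨Sum.inr ⟨t, htlen, by omega, htpos, htdl⟩, ?_⟩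
      simp only [hF, consS]
      rfl
  rw [← Nat.card_sum]
  exact (Nat.card_eq_of_bijective F ⟨hinj, hsurj⟩).symm

end PartB2

section PartB3
open Polynomial

lemma partB' : ∀ n : ℕ,
    ∑ k ∈ Finset.Icc 1 n, (Nat.card (Scomp n k) : Polynomial ℤ) * (X + 1) ^ k = P n := by
  intro n
  induction n using Nat.twoStepInduction with
  | zero => simp [P]
  | one =>
    rw [show Finset.Icc 1 1 = {1} from rfl, Finset.sum_singleton, card_S_one 1 le_rfl]
    simp [P]
  | more n ih1 ih0 =>
    -- ih1 : statement for n, ih0 : statement for n+1? check order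
    rw [← Finset.Ico_add_one_right_eq_Icc, Finset.sum_Ico_eq_sum_range]
    have hr : n + 2 + 1 - 1 = n + 2 := by omega
    rw [hr, Finset.sum_range_succ']
    have h0 : (Nat.card (Scomp (n + 2) (1 + 0)) : Polynomial ℤ) * (X + 1) ^ (1 + 0)
        = X + 1 := by
      rw [card_S_one (n + 2) (by omega)]
      norm_num
    rw [h0]
    have hterm : ∀ i ∈ Finset.range (n + 1),
        (Nat.card (Scomp (n + 2) (1 + (i + 1))) : Polynomial ℤ) * (X + 1) ^ (1 + (i + 1))
          = (X + 1) * ((Nat.card (Scomp (n + 1) (i + 1)) : Polynomial ℤ) * (X + 1) ^ (i + 1))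
            + (X + 1) * ((Nat.card (Scomp n (i + 1)) : Polynomial ℤ) * (X + 1) ^ (i + 1)) := by
      intro i _
      have : 1 + (i + 1) = (i + 1) + 1 := by omega
      rw [this, card_S_rec n (i + 1) (by omega)]
      push_cast
      ring
    rw [Finset.sum_congr rfl hterm, Finset.sum_add_distrib, ← Finset.mul_sum, ← Finset.mul_sum]
    have hA : ∑ i ∈ Finset.range (n + 1),
        (Nat.card (Scomp (n + 1) (i + 1)) : Polynomial ℤ) * (X + 1) ^ (i + 1) = P (n + 1) := by
      rw [← ih0]
      rw [← Finset.Ico_add_one_right_eq_Icc, Finset.sum_Ico_eq_sum_range]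
      have : n + 1 + 1 - 1 = n + 1 := by omega
      rw [this]
      apply Finset.sum_congr rfl
      intro i _
      rw [show 1 + i = i + 1 by omega]
    have hB : ∑ i ∈ Finset.range (n + 1),
        (Nat.card (Scomp n (i + 1)) : Polynomial ℤ) * (X + 1) ^ (i + 1) = P n := by
      rw [Finset.sum_range_succ, card_S_gt n (n + 1) (by omega)]
      rw [← ih1, ← Finset.Ico_add_one_right_eq_Icc, Finset.sum_Ico_eq_sum_range]
      have : n + 1 - 1 = n := by omega
      rw [this]
      norm_num
      apply Finset.sum_congr rfl
      intro i _
      rw [show 1 + i = i + 1 by omega]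
    rw [hA, hB]
    show (X + 1) * P (n + 1) + (X + 1) * P n + (X + 1) = P (n + 2)
    show _ = (X + 1) * (1 + P (n + 1) + P n)
    ring
end PartB3


/-- `F_{z_{n-1}}(t) = 1 + ∑ (t+1)^k`, summed over compositions
`(c_1,…,c_k)` of `n` with `c_1,…,c_{k-1} ∈ {1,2}`. -/
theorem stmt14 (n : ℕ) (hn : 1 ≤ n) :
    fPoly (zWord (n - 1)) = 1 + ∑ k ∈ Finset.Icc 1 n,
      (Nat.card {c : List ℕ // c.length = k ∧ c.sum = n ∧ (∀ a ∈ c, 0 < a) ∧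
          ∀ a ∈ c.dropLast, a = 1 ∨ a = 2} : Polynomial ℤ) *
        (Polynomial.X + 1) ^ k := by
  have h1 := partA (n - 1)
  have h2 : n - 1 + 1 = n := by omega
  rw [h2] at h1
  rw [h1]
  exact congrArg (HAdd.hAdd 1) (partB' n).symm
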